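/- The problem min over lower-triangular complex matrices L(1),…,L(M) with positive diagonals and Z of Σ_{k=1}^M N[−log det(L(k)^H L(k)) + tr(S̃(k) L(k)^H L(k))] + λΣ_{ij}|Z_{ij}| subject to L(k) = Z for all k is a convex optimization problem: the objective F(L) = −log det(L^H L) + tr(S̃ L^H L) is convex in L over lower-triangular matrices with positive diagonal when S̃ is Hermitian positive semidefinite. -/

import Mathlib

open Matrix ComplexOrder

/-- The objective `F(L) = −log det(Lᴴ L) + tr(S̃ Lᴴ L)` of the
penalized-likelihood problem is convex over the set of lower-triangular complex matrices
with positive (real) diagonal, when `S̃` is Hermitian positive semidefinite.  (Hence the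
constrained ADMM problem, which sums such terms over frequencies and adds the convex
penalty `λ∑|Z_{ij}|` with affine constraints `L(k) = Z`, is a convex problem.) -/
theorem stmt18 (p : ℕ) (S : Matrix (Fin p) (Fin p) ℂ) (hS : S.PosSemidef)
    (D : Set (Matrix (Fin p) (Fin p) ℂ))
    (hD : D = {L | (∀ i j : Fin p, i < j → L i j = 0) ∧
      ∀ i, (L i i).im = 0 ∧ 0 < (L i i).re})
    (F : Matrix (Fin p) (Fin p) ℂ → ℝ)
    (hF : ∀ L, F L = -Real.log ((Lᴴ * L).det.re) + ((S * (Lᴴ * L)).trace).re) :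
    ConvexOn ℝ D F := by
  subst hD
  set t : Matrix (Fin p) (Fin p) ℂ → Matrix (Fin p) (Fin p) ℂ → ℂ :=
    fun u v => (S * (uᴴ * v)).trace with ht
  -- nonnegativity of the quadratic form
  have tnn : ∀ z, 0 ≤ (t z z).re := by
    intro z
    have h1 : t z z = (z * S * zᴴ).trace := by
      show (S * (zᴴ * z)).trace = _
      rw [← Matrix.mul_assoc, Matrix.trace_mul_cycle]
    have h2 : (z * S * zᴴ).PosSemidef := hS.mul_mul_conjTranspose_same z
    rw [h1]
    have hd : ∀ i, 0 ≤ ((z * S * zᴴ) i i).re := by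
      intro i
      have := h2.dotProduct_mulVec_nonneg (Pi.single i 1)
      simp [dotProduct, Pi.single_apply, mulVec] at this
      exact (Complex.le_def.mp this).1
    rw [Matrix.trace, Complex.re_sum]
    exact Finset.sum_nonneg fun i _ => hd i
  -- expansion of the quadratic form
  have texp : ∀ (a b : ℝ) (x y : Matrix (Fin p) (Fin p) ℂ),
      t (a • x + b • y) (a • x + b • y)
        = (a:ℂ)^2 * t x x + (a:ℂ)*(b:ℂ)*(t x y + t y x) + (b:ℂ)^2 * t y y := by
    intro a b x y
    simp only [ht, conjTranspose_add, conjTranspose_smul, star_trivial,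
      Matrix.add_mul, Matrix.mul_add, Matrix.smul_mul, Matrix.mul_smul,
      Matrix.trace_add, Matrix.trace_smul, smul_smul, Complex.real_smul,
      Complex.ofReal_mul]
    ring
  have tsub : ∀ (x y : Matrix (Fin p) (Fin p) ℂ),
      t (x - y) (x - y) = t x x - t x y - t y x + t y y := by
    intro x y
    simp only [ht, conjTranspose_sub, Matrix.sub_mul, Matrix.mul_sub,
      Matrix.trace_sub]
    ring
  -- key identity
  have key : ∀ (a b : ℝ) (x y : Matrix (Fin p) (Fin p) ℂ), a + b = 1 →
      (a:ℂ) * t x x + (b:ℂ) * t y y - t (a • x + b • y) (a • x + b • y)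
        = (a:ℂ)*(b:ℂ) * t (x - y) (x - y) := by
    intro a b x y hab
    have hab' : (a:ℂ) + (b:ℂ) = 1 := by exact_mod_cast congrArg (Complex.ofReal) hab
    rw [texp, tsub]
    linear_combination (-( (a:ℂ) * t x x + (b:ℂ) * t y y)) * hab'
  -- quadratic part convexity inequality
  have Qineq : ∀ (a b : ℝ) (x y : Matrix (Fin p) (Fin p) ℂ), 0 ≤ a → 0 ≤ b → a + b = 1 →
      (t (a • x + b • y) (a • x + b • y)).re ≤ a * (t x x).re + b * (t y y).re := by
    intro a b x y ha hb hab
    have := congrArg Complex.re (key a b x y hab)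
    simp only [Complex.sub_re, Complex.add_re, Complex.mul_re, Complex.mul_im,
      Complex.ofReal_re, Complex.ofReal_im] at this
    nlinarith [tnn (x - y), mul_nonneg ha hb]
  -- determinant formula on D
  have hdet : ∀ L : Matrix (Fin p) (Fin p) ℂ,
      (∀ i j : Fin p, i < j → L i j = 0) → (∀ i, (L i i).im = 0 ∧ 0 < (L i i).re) →
      Real.log ((Lᴴ * L).det.re) = 2 * ∑ i, Real.log ((L i i).re) := by
    intro L h1 h2
    have htri : L.BlockTriangular ⇑OrderDual.toDual := fun i j hij => h1 i j hij
    have hdL : L.det = ((∏ i, (L i i).re : ℝ) : ℂ) := by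
      rw [Matrix.det_of_lowerTriangular L htri, Complex.ofReal_prod]
      refine Finset.prod_congr rfl fun i _ => ?_
      exact (Complex.ext (by simp) (by simp [(h2 i).1])).symm
    have hdet2 : (Lᴴ * L).det = ((∏ i, (L i i).re : ℝ)^2 : ℝ) := by
      rw [Matrix.det_mul, Matrix.det_conjTranspose, hdL]
      simp [Complex.star_def, Complex.conj_ofReal, sq]
    rw [hdet2, Complex.ofReal_re, Real.log_pow]
    rw [Real.log_prod (fun i _ => ne_of_gt (h2 i).2)]
    push_cast
    ring
  -- convexity of D
  have hDconv : Convex ℝ {L : Matrix (Fin p) (Fin p) ℂ |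
      (∀ i j : Fin p, i < j → L i j = 0) ∧ ∀ i, (L i i).im = 0 ∧ 0 < (L i i).re} := by
    rintro x ⟨hx1, hx2⟩ y ⟨hy1, hy2⟩ a b ha hb hab
    have hre : ∀ i j, ((a • x + b • y) i j) = (a:ℂ) * x i j + (b:ℂ) * y i j := by
      intro i j
      simp [Matrix.add_apply, Matrix.smul_apply, Complex.real_smul]
    refine ⟨fun i j hij => ?_, fun i => ⟨?_, ?_⟩⟩
    · rw [hre]; simp [hx1 i j hij, hy1 i j hij]
    · rw [hre]; simp [Complex.add_im, Complex.mul_im, (hx2 i).1, (hy2 i).1]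
    · rw [hre]
      simp only [Complex.add_re, Complex.mul_re, Complex.ofReal_re, Complex.ofReal_im,
        (hx2 i).1, (hy2 i).1]
      rcases ha.eq_or_lt with h | h
      · subst h; simp at hab; subst hab
        simpa using (hy2 i).2
      · nlinarith [(hx2 i).2, (hy2 i).2, mul_nonneg hb (le_of_lt (hy2 i).2)]
  refine ⟨hDconv, ?_⟩
  intro x hx y hy a b ha hb hab
  have hz := hDconv hx hy ha hb hab
  obtain ⟨hx1, hx2⟩ := hx
  obtain ⟨hy1, hy2⟩ := hy
  obtain ⟨hz1, hz2⟩ := hz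
  simp only [smul_eq_mul, hF, hdet _ hx1 hx2, hdet _ hy1 hy2, hdet _ hz1 hz2]
  have hQ := Qineq a b x y ha hb hab
  -- log part
  have hlog : ∀ i : Fin p,
      a * Real.log ((x i i).re) + b * Real.log ((y i i).re)
        ≤ Real.log (((a • x + b • y) i i).re) := by
    intro i
    have hre : ((a • x + b • y) i i).re = a * (x i i).re + b * (y i i).re := by
      simp [Matrix.add_apply, Matrix.smul_apply, Complex.real_smul, Complex.add_re,
        Complex.mul_re, Complex.ofReal_re, Complex.ofReal_im, (hx2 i).1, (hy2 i).1]
    have := strictConcaveOn_log_Ioi.concaveOn.2 (Set.mem_Ioi.mpr (hx2 i).2)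
      (Set.mem_Ioi.mpr (hy2 i).2) ha hb hab
    simpa [hre, smul_eq_mul] using this
  have hsum : a * ∑ i, Real.log ((x i i).re) + b * ∑ i, Real.log ((y i i).re)
      ≤ ∑ i, Real.log (((a • x + b • y) i i).re) := by
    rw [Finset.mul_sum, Finset.mul_sum, ← Finset.sum_add_distrib]
    exact Finset.sum_le_sum fun i _ => hlog i
  have hQ' : (t (a • x + b • y) (a • x + b • y)).re ≤ a * (t x x).re + b * (t y y).re := hQ
  simp only [ht] at hQ'
  nlinarith [hsum, hQ']
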